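/- Let f_M{}^N{}_P{}^Q be the real structure constants defined by ⟦⟦E_M, F^N⟧, E_P⟧ = Σ_Q f_M{}^N{}_P{}^Q E_Q, and for p ≥ 1 set f_{M1⋯Mp}{}^{N1⋯Np} = ⟨E_{M1⋯Mp} | F^{N1⋯Np}⟩ (with f_M{}^N = δ_M^N). Then for every p ≥ 2 the recursion holds: f_{M1⋯Mp}{}^{N1⋯Np} = Σ_{i=1}^{p−1} Σ_{j=i+1}^{p} (−1)^{i+p} Σ_P f_{Mi}{}^{N1}{}_{Mj}{}^P · f_{M1⋯M(i−1) M(i+1)⋯M(j−1) P M(j+1)⋯Mp}{}^{N2⋯Np} − Σ_P f_{Mp}{}^{N1}{}_{M(p−1)}{}^P · f_{M1⋯M(p−2) P}{}^{N2⋯Np}, where in each term of the double sum the index Mi is removed and Mj is replaced by the summation index P. -/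

import Mathlib

/-- Nested bracket `⟦f M1, ⟦f M2, …, ⟦f M(k-1), f Mk⟧⋯⟧⟧` of a family `f : ι → V`
along a tuple of `k` indices (junk value `0` for `k = 0`). -/
def nest {V : Type} [AddCommGroup V] [Module ℝ V] {ι : Type}
    (bb : V →ₗ[ℝ] V →ₗ[ℝ] V) (f : ι → V) : (k : ℕ) → (Fin k → ι) → V
  | 0, _ => 0
  | 1, M => f (M 0)
  | (k + 2), M => bb (f (M 0)) (nest bb f (k + 1) (fun i => M i.succ))

section aux
variable {V : Type} [AddCommGroup V] [Module ℝ V]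
  (U : ℤ → Submodule ℝ V)
  (bb : V →ₗ[ℝ] V →ₗ[ℝ] V)
  {ι : Type} [Fintype ι] [DecidableEq ι]
  (E F : ι → V) (f : ι → ι → ι → ι → ℝ)

lemma nest_mem (hE : ∀ M, E M ∈ U (-1))
    (hgrade : ∀ (p q : ℤ) (x y : V), x ∈ U p → y ∈ U q → bb x y ∈ U (p + q)) :
    ∀ (k : ℕ) (M : Fin (k+1) → ι), nest bb E (k+1) M ∈ U (-((k:ℤ)+1))
  | 0, M => by simpa [nest] using hE (M 0)
  | (k+1), M => by
      have h := hgrade (-1) (-((k:ℤ)+1)) (E (M 0)) (nest bb E (k+1) (fun i => M i.succ))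
        (hE _) (nest_mem hE hgrade k _)
      show nest bb E (k+1+1) M ∈ _
      have : nest bb E (k+1+1) M = bb (E (M 0)) (nest bb E (k+1) (fun i => M i.succ)) := rfl
      rw [this]
      convert h using 2
      push_cast; ring

lemma nest_cons (k : ℕ) (a : ι) (W : Fin (k+1) → ι) :
    nest bb E (k+1+1) (Fin.cons a W) = bb (E a) (nest bb E (k+1) W) := by
  have h : nest bb E (k+1+1) (Fin.cons a W)
      = bb (E ((Fin.cons a W : Fin (k+1+1) → ι) 0))
          (nest bb E (k+1) (fun i => (Fin.cons a W : Fin (k+1+1) → ι) i.succ)) := rfl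
  rw [h, Fin.cons_zero]
  congr 1
  all_goals (funext i; rw [Fin.cons_succ])

lemma deriv_lemma
    (hE : ∀ M, E M ∈ U (-1)) (hF : ∀ M, F M ∈ U 1)
    (hgrade : ∀ (p q : ℤ) (x y : V), x ∈ U p → y ∈ U q → bb x y ∈ U (p + q))
    (hjac : ∀ (p q : ℤ) (x y z : V), x ∈ U p → y ∈ U q →
      bb (bb x y) z = bb x (bb y z) - ((-1 : ℝ) ^ (p * q)) • bb y (bb x z))
    (hf : ∀ M N Pt, bb (bb (E M) (F N)) (E Pt) = ∑ Q : ι, f M N Pt Q • E Q) :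
    ∀ (k : ℕ) (M : Fin (k+1) → ι) (P N : ι),
      bb (bb (E P) (F N)) (nest bb E (k+1) M)
        = ∑ t : Fin (k+1), ∑ Q : ι, f P N (M t) Q • nest bb E (k+1) (Function.update M t Q)
  | 0, M, P, N => by
      have : nest bb E 1 M = E (M 0) := rfl
      rw [this, hf]
      rw [Fin.sum_univ_one]
      refine Finset.sum_congr rfl fun Q _ => ?_
      congr 1
      all_goals (show E Q = E (Function.update M 0 Q 0); simp)
  | (k+1), M, P, N => by
      have h0 : (bb (E P)) (F N) ∈ U 0 := by simpa using hgrade (-1) 1 _ _ (hE P) (hF N)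
      have hX : nest bb E (k+1+1) M = bb (E (M 0)) (nest bb E (k+1) (fun i => M i.succ)) := rfl
      have hjj := hjac 0 (-1) (bb (E P) (F N)) (E (M 0)) (nest bb E (k+1) (fun i => M i.succ))
        h0 (hE _)
      have hsign : ((-1 : ℝ) ^ ((0 : ℤ) * (-1 : ℤ))) = 1 := by norm_num
      rw [hsign, one_smul] at hjj
      -- hjj : bb (bb h (E M0)) X' = bb h (bb (E M0) X') - bb (E M0) (bb h X')
      have key : bb (bb (E P) (F N)) (nest bb E (k+1+1) M)
          = bb (bb (bb (E P) (F N)) (E (M 0))) (nest bb E (k+1) (fun i => M i.succ))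
            + bb (E (M 0)) (bb (bb (E P) (F N)) (nest bb E (k+1) (fun i => M i.succ))) := by
        rw [hX]; rw [hjj]; abel
      have e1 : bb (bb (bb (E P) (F N)) (E (M 0))) (nest bb E (k+1) (fun i => M i.succ))
          = ∑ Q : ι, f P N (M 0) Q • nest bb E (k+1+1) (Function.update M 0 Q) := by
        rw [hf, map_sum, LinearMap.sum_apply]
        refine Finset.sum_congr rfl fun Q _ => ?_
        rw [map_smul, LinearMap.smul_apply]
        have hupd : Function.update M 0 Q = Fin.cons Q (fun i => M i.succ) := by
          funext i
          refine Fin.cases ?_ (fun j => ?_) i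
          · simp
          · simp [Function.update_of_ne (Fin.succ_ne_zero _)]
        rw [hupd, nest_cons bb E]
      have e2 : bb (E (M 0)) (∑ t : Fin (k+1), ∑ Q : ι,
            f P N (M t.succ) Q • nest bb E (k+1) (Function.update (fun i => M i.succ) t Q))
          = ∑ t : Fin (k+1), ∑ Q : ι,
            f P N (M t.succ) Q • nest bb E (k+1+1) (Function.update M t.succ Q) := by
        rw [map_sum]
        refine Finset.sum_congr rfl fun t _ => ?_
        rw [map_sum]
        refine Finset.sum_congr rfl fun Q _ => ?_
        rw [map_smul]
        have hupd : Function.update M t.succ Q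
            = Fin.cons (M 0) (Function.update (fun i => M i.succ) t Q) := by
          funext i
          refine Fin.cases ?_ (fun j => ?_) i
          · simp [Function.update_of_ne (Fin.succ_ne_zero t).symm]
          · rw [Fin.cons_succ]
            rcases eq_or_ne j t with rfl | hne
            · simp
            · rw [Function.update_of_ne (by simpa using hne),
                Function.update_of_ne hne]
        rw [hupd, nest_cons bb E]
      rw [key, deriv_lemma hE hF hgrade hjac hf k (fun i => M i.succ) P N, e1, e2,
        ← Fin.sum_univ_succ (f := fun t => ∑ Q : ι,
          f P N (M t) Q • nest bb E (k+1+1) (Function.update M t Q))]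

lemma sum_split {W : Type} [AddCommMonoid W] (n : ℕ) (h : Fin (n+1) → Fin (n+1) → W) :
    (∑ i : Fin (n+1), ∑ j : Fin (n+1), if i < j then h i j else 0)
      = (∑ j : Fin n, h 0 j.succ)
        + ∑ i : Fin n, ∑ j : Fin n, if i < j then h i.succ j.succ else 0 := by
  rw [Fin.sum_univ_succ]
  congr 1
  · rw [Fin.sum_univ_succ, if_neg (lt_irrefl _), zero_add]
    refine Finset.sum_congr rfl fun j _ => ?_
    rw [if_pos (Fin.succ_pos j)]
  · refine Finset.sum_congr rfl fun i _ => ?_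
    rw [Fin.sum_univ_succ, if_neg (Fin.not_lt_zero _), zero_add]
    refine Finset.sum_congr rfl fun j _ => ?_
    simp only [Fin.succ_lt_succ_iff]

lemma assemble {W : Type} [AddCommGroup W] (a b c a' b' c' : W)
    (h1 : a = a') (h2 : b = b') (h3 : c = c') : (a - c) + b = (b' + a') - c' := by
  subst h1 h2 h3; abel

lemma neg_one_pow_mod (m n : ℕ) (h : m % 2 = n % 2) : ((-1:ℝ))^m = (-1)^n := by
  conv_lhs => rw [← Nat.div_add_mod m 2, pow_add, pow_mul, neg_one_sq, one_pow, one_mul]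
  conv_rhs => rw [← Nat.div_add_mod n 2, pow_add, pow_mul, neg_one_sq, one_pow, one_mul]
  rw [h]

lemma main_vec
    (hE : ∀ M, E M ∈ U (-1)) (hF : ∀ M, F M ∈ U 1)
    (hgrade : ∀ (p q : ℤ) (x y : V), x ∈ U p → y ∈ U q → bb x y ∈ U (p + q))
    (hanti : ∀ (p q : ℤ) (x y : V), x ∈ U p → y ∈ U q →
      bb x y = (-((-1 : ℝ) ^ (p * q))) • bb y x)
    (hjac : ∀ (p q : ℤ) (x y z : V), x ∈ U p → y ∈ U q →
      bb (bb x y) z = bb x (bb y z) - ((-1 : ℝ) ^ (p * q)) • bb y (bb x z))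
    (hf : ∀ M N Pt, bb (bb (E M) (F N)) (E Pt) = ∑ Q : ι, f M N Pt Q • E Q) :
    ∀ (k : ℕ) (M : Fin (k+2) → ι) (N : ι),
      bb (nest bb E (k+2) M) (F N)
        = (∑ i : Fin (k+2), ∑ j : Fin (k+2),
            if i < j then
              ((-1 : ℝ) ^ ((i : ℕ) + 1 + (k+2))) •
                ∑ Q : ι, f (M i) N (M j) Q •
                  nest bb E (k+1)
                    (Function.update (fun t : Fin (k+1) => M (i.succAbove t))
                      ⟨(j : ℕ) - 1, (by have := j.isLt; omega : (j : ℕ) - 1 < k + 1 + 0)⟩ Q)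
            else 0)
          - ∑ Q : ι, f (M (Fin.last (k+1))) N (M ⟨k, (by omega : k < k + 2 + 0)⟩) Q •
              nest bb E (k+1)
                (Fin.snoc (fun t : Fin k => M ⟨(t : ℕ), (by have := t.isLt; omega : (t : ℕ) < k + 2 + 0)⟩) Q)
  | 0, M, N => by
      have h0 : bb (E (M 0)) (F N) ∈ U 0 := by simpa using hgrade (-1) 1 _ _ (hE _) (hF N)
      have h1 : bb (E (M 1)) (F N) ∈ U 0 := by simpa using hgrade (-1) 1 _ _ (hE _) (hF N)
      have hX : nest bb E 2 M = bb (E (M 0)) (E (M 1)) := rfl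
      rw [hX, hjac (-1) (-1) _ _ _ (hE _) (hE _),
        hanti (-1) 0 _ _ (hE (M 0)) h1, hanti (-1) 0 _ _ (hE (M 1)) h0, hf, hf]
      simp only [Fin.sum_univ_succ, Fin.sum_univ_zero]
      norm_num
      have hn1 : ∀ W : Fin (0+1) → ι, nest bb E (0+1) W = E (W 0) := fun _ => rfl
      simp only [hn1]
      have hl : (Fin.last (0+1) : Fin 2) = 1 := rfl
      simp only [hl, Function.update_self, Fin.snoc]
      norm_num
      abel
  | (k+1), M, N => by
      have hX : nest bb E (k+1+2) M
          = bb (E (M 0)) (nest bb E (k+2) (fun i => M i.succ)) := rfl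
      have hXmem : nest bb E (k+2) (fun i => M i.succ) ∈ U (-((k:ℤ)+2)) := by
        have := nest_mem U bb E hE hgrade (k+1) (fun i => M i.succ)
        convert this using 2
        all_goals (push_cast; ring)
      have h0 : bb (E (M 0)) (F N) ∈ U 0 := by simpa using hgrade (-1) 1 _ _ (hE _) (hF N)
      have hj := hjac (-1) (-((k:ℤ)+2)) (E (M 0)) (nest bb E (k+2) (fun i => M i.succ)) (F N)
        (hE _) hXmem
      have hflip : bb (nest bb E (k+2) (fun i => M i.succ)) (bb (E (M 0)) (F N))
          = - bb (bb (E (M 0)) (F N)) (nest bb E (k+2) (fun i => M i.succ)) := by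
        have := hanti (-((k:ℤ)+2)) 0 _ _ hXmem h0
        simpa using this
      have hsgn : ((-1:ℝ) ^ ((-1:ℤ) * -((k:ℤ)+2))) = (-1:ℝ)^(k+2) := by
        rw [show ((-1:ℤ) * -((k:ℤ)+2)) = ((k+2 : ℕ) : ℤ) by push_cast; ring, zpow_natCast]
      have key : bb (nest bb E (k+1+2) M) (F N)
          = bb (E (M 0)) (bb (nest bb E (k+2) (fun i => M i.succ)) (F N))
            + ((-1:ℝ)^(k+2)) • bb (bb (E (M 0)) (F N)) (nest bb E (k+2) (fun i => M i.succ)) := by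
        rw [hX, hj, hsgn, hflip, smul_neg]
        abel
      rw [key, main_vec hE hF hgrade hanti hjac hf k (fun i => M i.succ) N,
        deriv_lemma U bb E F f hE hF hgrade hjac hf (k+1) (fun i => M i.succ) (M 0) N]
      simp only [map_sub, map_sum, map_smul, apply_ite (bb (E (M 0))), map_zero,
        ← nest_cons bb E]
      conv_rhs => rw [sum_split]
      apply assemble
      · -- double sum part
        refine Finset.sum_congr rfl fun i _ => Finset.sum_congr rfl fun j _ => ?_
        split_ifs with hij
        · have hvij : (i:ℕ) < (j:ℕ) := hij
          congr 1
          · rw [Fin.val_succ]; exact neg_one_pow_mod _ _ (by omega)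
          · refine Finset.sum_congr rfl fun Q _ => ?_
            congr 2
            funext t
            refine Fin.cases ?_ (fun s => ?_) t
            · rw [Fin.cons_zero, Function.update_of_ne
                (by simp only [ne_eq, Fin.ext_iff, Fin.val_zero, Fin.val_succ]; omega),
                Fin.succ_succAbove_zero]
            · rw [Fin.cons_succ]
              rcases eq_or_ne s (⟨(j:ℕ)-1, by have := j.isLt; omega⟩ : Fin (k+1)) with rfl|hs
              · rw [Function.update_self,
                  show Fin.succ (⟨(j:ℕ)-1, by have := j.isLt; omega⟩ : Fin (k+1))
                    = (⟨(j.succ:ℕ)-1, by have := j.succ.isLt; omega⟩ : Fin (k+2)) by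
                      simp only [Fin.ext_iff, Fin.val_succ]; omega,
                  Function.update_self]
              · rw [Function.update_of_ne hs, Function.update_of_ne
                  (by simp only [ne_eq, Fin.ext_iff, Fin.val_succ] at hs ⊢; omega),
                  Fin.succ_succAbove_succ]
        · rfl
      · -- i = 0 part
        rw [Finset.smul_sum]
        refine Finset.sum_congr rfl fun t _ => ?_
        congr 1
        rw [Fin.val_zero]; exact neg_one_pow_mod _ _ (by omega)
      · -- last term
        refine Finset.sum_congr rfl fun Q _ => ?_
        congr 2 <;>
        first
          | rw [Fin.succ_last]
          | (simp only [Fin.ext_iff, Fin.val_succ])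
          | (funext t
             refine Fin.cases ?_ (fun s => ?_) t
             · rw [Fin.cons_zero]
               simp only [Fin.snoc, Fin.val_zero]
               simp only [Nat.zero_lt_succ, ↓reduceDIte]
               simp only [Fin.castLT]
               congr 1
             · rw [Fin.cons_succ]
               simp only [Fin.snoc, Fin.val_succ, Fin.castLT]
               rcases Nat.lt_or_ge (s : ℕ) k with hs | hs
               · rw [dif_pos hs, dif_pos (by omega)]
                 simp only [cast_eq]
                 first
                   | rfl
                   | (congr 1; simp only [Fin.ext_iff, Fin.val_succ])
                   | congr 1
               · rw [dif_neg (by omega), dif_neg (by omega)])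
end aux

/-- With `f_M{}^N{}_P{}^Q` the structure constants of the triple
product and `f_{M1⋯Mp}{}^{N1⋯Np} = ⟨E_{M1⋯Mp} | F^{N1⋯Np}⟩`, for every `p = k + 2 ≥ 2`
the recursion holds:
`f_{M1⋯Mp}{}^{N1⋯Np} = Σ_{i<j} (−1)^{i+p} Σ_P f_{Mi}{}^{N1}{}_{Mj}{}^P
f_{M1⋯M(i−1)M(i+1)⋯M(j−1)PM(j+1)⋯Mp}{}^{N2⋯Np}
− Σ_P f_{Mp}{}^{N1}{}_{M(p−1)}{}^P f_{M1⋯M(p−2)P}{}^{N2⋯Np}`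
(the Lean index `i : Fin p` is the paper index `i` shifted by one, whence the sign
`(−1)^{(i+1)+p}` below). -/
theorem form_E_multi_F_multi_recursion
    {V : Type} [AddCommGroup V] [Module ℝ V]
    (U : ℤ → Submodule ℝ V)
    (bb : V →ₗ[ℝ] V →ₗ[ℝ] V)
    (form : V →ₗ[ℝ] V →ₗ[ℝ] ℝ)
    (hgrade : ∀ (p q : ℤ) (x y : V), x ∈ U p → y ∈ U q → bb x y ∈ U (p + q))
    (hanti : ∀ (p q : ℤ) (x y : V), x ∈ U p → y ∈ U q →
      bb x y = (-((-1 : ℝ) ^ (p * q))) • bb y x)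
    (hjac : ∀ (p q : ℤ) (x y z : V), x ∈ U p → y ∈ U q →
      bb (bb x y) z = bb x (bb y z) - ((-1 : ℝ) ^ (p * q)) • bb y (bb x z))
    (hform0 : ∀ (p q : ℤ) (x y : V), x ∈ U p → y ∈ U q → p + q ≠ 0 → form x y = 0)
    (hforminv : ∀ x y z : V, form (bb x y) z = form x (bb y z))
    {ι : Type} [Fintype ι] [DecidableEq ι]
    (E F : ι → V)
    (hE : ∀ M, E M ∈ U (-1))
    (hF : ∀ M, F M ∈ U 1)
    (hEbasis : LinearIndependent ℝ E)
    (hEspan : Submodule.span ℝ (Set.range E) = U (-1))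
    (hEF : ∀ M N, form (E M) (F N) = if M = N then (1 : ℝ) else 0)
    (f : ι → ι → ι → ι → ℝ)
    (hf : ∀ M N Pt, bb (bb (E M) (F N)) (E Pt) = ∑ Q : ι, f M N Pt Q • E Q)
    (k : ℕ) :
    ∀ (M N : Fin (k + 2) → ι),
      form (nest bb E (k + 2) M) (nest bb F (k + 2) N)
        = (∑ i : Fin (k + 2), ∑ j : Fin (k + 2),
            if i < j then
              ((-1 : ℝ) ^ ((i : ℕ) + 1 + (k + 2))) *
                ∑ Pq : ι, f (M i) (N 0) (M j) Pq *
                  form (nest bb E (k + 1)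
                      (Function.update (fun t : Fin (k + 1) => M (i.succAbove t))
                        ⟨(j : ℕ) - 1, by have := j.isLt; omega⟩ Pq))
                    (nest bb F (k + 1) (Fin.tail N))
            else 0)
          - ∑ Pq : ι, f (M (Fin.last (k + 1))) (N 0) (M ⟨k, by omega⟩) Pq *
              form (nest bb E (k + 1)
                  (Fin.snoc (fun t : Fin k => M ⟨(t : ℕ), by have := t.isLt; omega⟩) Pq))
                (nest bb F (k + 1) (Fin.tail N)) := by
  intro M N
  have hY : nest bb F (k+2) N = bb (F (N 0)) (nest bb F (k+1) (Fin.tail N)) := rfl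
  rw [hY, ← hforminv]
  rw [main_vec U bb E F f hE hF hgrade hanti hjac hf k M (N 0)]
  simp only [map_sub, map_sum, map_smul, LinearMap.sub_apply, LinearMap.sum_apply,
    LinearMap.smul_apply, smul_eq_mul,
    apply_ite (fun v : V => form v (nest bb F (k+1) (Fin.tail N))),
    map_zero, LinearMap.zero_apply]
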